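/- Generalized Pinsker's inequality: for weakly compact convex sets P, Q of probability measures on a Polish space, max{KL(P‖Q), KL(Q‖P)} ≥ 2·V(P,Q)², where V(P,Q) := max( sup_{μ∈P} inf_{ν∈Q} V(μ,ν), sup_{ν∈Q} inf_{μ∈P} V(μ,ν) ). -/

import Mathlib

open MeasureTheory Real ENNReal Filter Topology
open scoped Classical

noncomputable def klDiv {X : Type*} [MeasurableSpace X] (μ ν : Measure X) : EReal :=
  if μ ≪ ν ∧ Integrable (fun x => Real.log (μ.rnDeriv ν x).toReal) μ
  then ((∫ x, Real.log (μ.rnDeriv ν x).toReal ∂μ : ℝ) : EReal)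
  else ⊤

noncomputable def tvDist {X : Type*} [MeasurableSpace X] (μ ν : Measure X) : ℝ :=
  ⨆ A : {A : Set X // MeasurableSet A}, |(μ A).toReal - (ν A).toReal|


noncomputable def genKL {X : Type*} [MeasurableSpace X]
    (P Q : Set (ProbabilityMeasure X)) : EReal :=
  ⨆ μ ∈ P, ⨅ ν ∈ Q, klDiv μ.toMeasure ν.toMeasure

noncomputable def genV {X : Type*} [MeasurableSpace X]
    (P Q : Set (ProbabilityMeasure X)) : ℝ :=
  max (⨆ μ : P, ⨅ ν : Q, tvDist μ.1.toMeasure ν.1.toMeasure)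
      (⨆ ν : Q, ⨅ μ : P, tvDist μ.1.toMeasure ν.1.toMeasure)

def ConvexPM {X : Type*} [MeasurableSpace X] (P : Set (ProbabilityMeasure X)) : Prop :=
  ∀ μ ∈ P, ∀ ν ∈ P, ∀ a b : ℝ≥0∞, a + b = 1 →
    ∃ κ ∈ P, κ.toMeasure = a • μ.toMeasure + b • ν.toMeasure

def midSet {X : Type*} [MeasurableSpace X]
    (P Q : Set (ProbabilityMeasure X)) : Set (ProbabilityMeasure X) :=
  {κ | ∃ μ ∈ P, ∃ ν ∈ Q, κ.toMeasure = (2:ℝ≥0∞)⁻¹ • μ.toMeasure + (2:ℝ≥0∞)⁻¹ • ν.toMeasure}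

noncomputable def genJS {X : Type*} [MeasurableSpace X]
    (P Q : Set (ProbabilityMeasure X)) : EReal :=
  ((1/2 : ℝ) : EReal) * genKL P (midSet P Q) + ((1/2 : ℝ) : EReal) * genKL Q (midSet P Q)



lemma log_ge_one_sub_inv {x : ℝ} (hx : 0 < x) : 1 - x⁻¹ ≤ Real.log x := by
  have h := Real.log_le_sub_one_of_pos (inv_pos.mpr hx)
  rw [Real.log_inv] at h
  linarith

lemma pinsker_pointwise {x : ℝ} (hx : 0 ≤ x) :
    3 * (x - 1) ^ 2 ≤ (2 * x + 4) * (x * Real.log x - x + 1) := by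
  rcases eq_or_lt_of_le hx with h0 | hx
  · simp [← h0]
    norm_num
  set F : ℝ → ℝ := fun y => (2 * y + 4) * (y * Real.log y - y + 1) - 3 * (y - 1) ^ 2 with hF
  set G : ℝ → ℝ := fun y => 4 * ((y + 1) * Real.log y - 2 * (y - 1)) with hG
  have hFd : ∀ y : ℝ, 0 < y → HasDerivAt F (G y) y := by
    intro y hy
    have h1 : HasDerivAt (fun t : ℝ => t * Real.log t) (Real.log y + 1) y :=
      Real.hasDerivAt_mul_log hy.ne'
    have h2 : HasDerivAt (fun t : ℝ => t * Real.log t - t + 1) (Real.log y + 1 - 1 + 0) y :=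
      by simpa using (h1.sub (hasDerivAt_id y)).add_const 1
    have h3 : HasDerivAt (fun t : ℝ => 2 * t + 4) 2 y := by
      simpa using ((hasDerivAt_id y).const_mul 2).add_const 4
    have h4 := h3.mul h2
    have h5 : HasDerivAt (fun t : ℝ => 3 * (t - 1) ^ 2) (3 * (2 * (y - 1))) y := by
      have := (((hasDerivAt_id y).sub_const 1).pow 2).const_mul 3
      simpa using this
    have := h4.sub h5
    exact this.congr_deriv (by simp only [hG]; ring)
  have hGd : ∀ y : ℝ, 0 < y → HasDerivAt G (4 * (Real.log y + y⁻¹ - 1)) y := by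
    intro y hy
    have h1 : HasDerivAt (fun t : ℝ => (t + 1) * Real.log t)
        (1 * Real.log y + (y + 1) * y⁻¹) y :=
      ((hasDerivAt_id y).add_const 1).mul (Real.hasDerivAt_log hy.ne')
    have h2 : HasDerivAt (fun t : ℝ => 2 * (t - 1)) 2 y := by
      simpa using ((hasDerivAt_id y).sub_const 1).const_mul 2
    have := (h1.sub h2).const_mul 4
    have hy0 := hy.ne'
    exact this.congr_deriv (by field_simp; ring)
  have hGmono : MonotoneOn G (Set.Ioi (0:ℝ)) := by
    refine monotoneOn_of_deriv_nonneg (convex_Ioi 0) ?_ ?_ ?_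
    · intro y hy
      exact ((hGd y hy).continuousAt).continuousWithinAt
    · intro y hy
      rw [interior_Ioi] at hy
      exact ((hGd y hy).differentiableAt).differentiableWithinAt
    · intro y hy
      rw [interior_Ioi] at hy
      rw [(hGd y hy).deriv]
      have := log_ge_one_sub_inv hy
      nlinarith
  have hG1 : G 1 = 0 := by simp [hG]
  have hF1 : F 1 = 0 := by simp [hF]
  have key : 0 ≤ F x := by
    rcases le_or_gt 1 x with h1 | h1
    · have hmono : MonotoneOn F (Set.Ici (1:ℝ)) := by
        refine monotoneOn_of_deriv_nonneg (convex_Ici 1) ?_ ?_ ?_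
        · intro y hy
          exact ((hFd y (lt_of_lt_of_le one_pos hy)).continuousAt).continuousWithinAt
        · intro y hy
          rw [interior_Ici] at hy
          exact ((hFd y (lt_trans one_pos hy)).differentiableAt).differentiableWithinAt
        · intro y hy
          rw [interior_Ici] at hy
          have hy0 : (0:ℝ) < y := lt_trans one_pos hy
          rw [(hFd y hy0).deriv]
          calc (0:ℝ) = G 1 := hG1.symm
            _ ≤ G y := hGmono (Set.mem_Ioi.mpr one_pos) (Set.mem_Ioi.mpr hy0) hy.le
      have := hmono (Set.mem_Ici.mpr (le_refl 1)) h1 h1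
      rw [hF1] at this; exact this
    · have hanti : AntitoneOn F (Set.Icc x 1) := by
        refine antitoneOn_of_deriv_nonpos (convex_Icc x 1) ?_ ?_ ?_
        · intro y hy
          exact ((hFd y (lt_of_lt_of_le hx hy.1)).continuousAt).continuousWithinAt
        · intro y hy
          rw [interior_Icc] at hy
          exact ((hFd y (lt_trans hx hy.1)).differentiableAt).differentiableWithinAt
        · intro y hy
          rw [interior_Icc] at hy
          have hy0 : (0:ℝ) < y := lt_trans hx hy.1
          rw [(hFd y hy0).deriv]
          calc G y ≤ G 1 := hGmono (Set.mem_Ioi.mpr hy0) (Set.mem_Ioi.mpr one_pos) hy.2.le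
            _ = 0 := hG1
      have := hanti (Set.mem_Icc.mpr ⟨le_refl x, h1.le⟩) (Set.mem_Icc.mpr ⟨h1.le, le_refl 1⟩) h1.le
      rw [hF1] at this; exact this
  simpa [hF] using key

lemma pinsker_real {X : Type*} [MeasurableSpace X] (μ ν : Measure X)
    [IsProbabilityMeasure μ] [IsProbabilityMeasure ν] (hμν : μ ≪ ν)
    (hint : Integrable (fun x => Real.log (μ.rnDeriv ν x).toReal) μ) :
    2 * (tvDist μ ν) ^ 2 ≤ ∫ x, Real.log (μ.rnDeriv ν x).toReal ∂μ := by
  set f : X → ℝ := fun x => (μ.rnDeriv ν x).toReal with hf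
  have hf_meas : Measurable f := (Measure.measurable_rnDeriv μ ν).ennreal_toReal
  have hf_nonneg : ∀ x, 0 ≤ f x := fun x => ENNReal.toReal_nonneg
  have hf_int : Integrable f ν := Measure.integrable_toReal_rnDeriv
  have hf1 : ∫ x, f x ∂ν = 1 := by
    rw [hf, Measure.integral_toReal_rnDeriv hμν]; simp
  set k : ℝ := ∫ x, Real.log (f x) ∂μ with hk
  have hflogf_int : Integrable (fun x => f x * Real.log (f x)) ν := by
    have := (integrable_rnDeriv_smul_iff (f := fun x => Real.log (f x)) hμν).mpr hint
    simpa [smul_eq_mul] using this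
  have hflogf : ∫ x, f x * Real.log (f x) ∂ν = k := by
    have := integral_rnDeriv_smul (f := fun x => Real.log (f x)) hμν
    simpa [smul_eq_mul] using this
  set φ : X → ℝ := fun x => f x * Real.log (f x) - f x + 1 with hφ
  have hφ_int : Integrable φ ν := (hflogf_int.sub hf_int).add (integrable_const 1)
  have hφ_val : ∫ x, φ x ∂ν = k := by
    have e1 : ∫ x, (f x * Real.log (f x) - f x + 1) ∂ν
        = (∫ x, (f x * Real.log (f x) - f x) ∂ν) + ∫ _x, (1:ℝ) ∂ν :=
      integral_add (hflogf_int.sub hf_int) (integrable_const 1)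
    have e2 : ∫ x, (f x * Real.log (f x) - f x) ∂ν
        = (∫ x, f x * Real.log (f x) ∂ν) - ∫ x, f x ∂ν := integral_sub hflogf_int hf_int
    have : ∫ x, φ x ∂ν = ∫ x, (f x * Real.log (f x) - f x + 1) ∂ν := rfl
    rw [this, e1, e2, hflogf, hf1]
    simp
  have hφ_nonneg : ∀ x, 0 ≤ φ x := by
    intro x
    have h := pinsker_pointwise (hf_nonneg x)
    show 0 ≤ f x * Real.log (f x) - f x + 1
    nlinarith [sq_nonneg (f x - 1), hf_nonneg x]
  have hk_nonneg : 0 ≤ k := hφ_val ▸ integral_nonneg hφ_nonneg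
  -- the quadratic quantity
  set I : ℝ := ∫ x, (f x - 1) ^ 2 / (f x + 2) ∂ν with hI
  have hfp2_pos : ∀ x, (0:ℝ) < f x + 2 := fun x => by linarith [hf_nonneg x]
  have habs_le : ∀ x, |f x - 1| ≤ f x + 2 := by
    intro x
    rcases abs_cases (f x - 1) with ⟨h, _⟩ | ⟨h, _⟩ <;> rw [h] <;> linarith [hf_nonneg x]
  have hq_le : ∀ x, (f x - 1) ^ 2 / (f x + 2) ≤ |f x - 1| := by
    intro x
    rw [div_le_iff₀ (hfp2_pos x), ← sq_abs]
    nlinarith [abs_nonneg (f x - 1), habs_le x]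
  have hq_nonneg : ∀ x, 0 ≤ (f x - 1) ^ 2 / (f x + 2) :=
    fun x => div_nonneg (sq_nonneg _) (hfp2_pos x).le
  have habs_int : Integrable (fun x => |f x - 1|) ν := (hf_int.sub (integrable_const 1)).abs
  have hI_int : Integrable (fun x => (f x - 1) ^ 2 / (f x + 2)) ν := by
    refine habs_int.mono' ?_ ?_
    · exact (((hf_meas.sub measurable_const).pow_const 2).div
        (hf_meas.add measurable_const)).aestronglyMeasurable
    · refine Filter.Eventually.of_forall fun x => ?_
      rw [Real.norm_eq_abs, abs_of_nonneg (hq_nonneg x)]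
      exact hq_le x
  have hI_le : I ≤ 2 / 3 * k := by
    have : ∀ x, (f x - 1) ^ 2 / (f x + 2) ≤ 2 / 3 * φ x := by
      intro x
      have h := pinsker_pointwise (hf_nonneg x)
      rw [div_le_iff₀ (hfp2_pos x)]
      nlinarith
    calc I ≤ ∫ x, 2 / 3 * φ x ∂ν := integral_mono hI_int (hφ_int.const_mul _) this
      _ = 2 / 3 * k := by rw [integral_const_mul, hφ_val]
  set J : ℝ := ∫ x, |f x - 1| ∂ν with hJ
  have hJ_nonneg : 0 ≤ J := integral_nonneg fun x => abs_nonneg _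
  -- Cauchy-Schwarz via discriminant
  have hCS : J ^ 2 ≤ 3 * I := by
    set t : ℝ := J / 3 with ht
    have hexp : ∀ x, (|f x - 1| / Real.sqrt (f x + 2) - t * Real.sqrt (f x + 2)) ^ 2
        = (f x - 1) ^ 2 / (f x + 2) - 2 * t * |f x - 1| + t ^ 2 * (f x + 2) := by
      intro x
      have hs : Real.sqrt (f x + 2) ^ 2 = f x + 2 := Real.sq_sqrt (hfp2_pos x).le
      have hs0 : Real.sqrt (f x + 2) ≠ 0 := by
        positivity
      have e1 : (|f x - 1| / Real.sqrt (f x + 2)) ^ 2 = (f x - 1) ^ 2 / (f x + 2) := by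
        rw [div_pow, sq_abs, hs]
      have e2 : |f x - 1| / Real.sqrt (f x + 2) * (t * Real.sqrt (f x + 2)) = t * |f x - 1| := by
        field_simp
      have e3 : (t * Real.sqrt (f x + 2)) ^ 2 = t ^ 2 * (f x + 2) := by
        rw [mul_pow, hs]
      rw [sub_sq, e1, e3, mul_assoc, e2]
      ring
    have h0 : 0 ≤ ∫ x, ((f x - 1) ^ 2 / (f x + 2) - 2 * t * |f x - 1| + t ^ 2 * (f x + 2)) ∂ν := by
      rw [← integral_congr_ae (Filter.Eventually.of_forall hexp)]
      exact integral_nonneg fun x => sq_nonneg _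
    have hint2 : Integrable (fun x => t ^ 2 * (f x + 2)) ν :=
      (hf_int.add (integrable_const 2)).const_mul _
    have hint1 : Integrable (fun x => 2 * t * |f x - 1|) ν := habs_int.const_mul _
    have e1 : ∫ x, ((f x - 1) ^ 2 / (f x + 2) - 2 * t * |f x - 1| + t ^ 2 * (f x + 2)) ∂ν
        = (∫ x, ((f x - 1) ^ 2 / (f x + 2) - 2 * t * |f x - 1|) ∂ν)
          + ∫ x, t ^ 2 * (f x + 2) ∂ν :=
      integral_add (hI_int.sub hint1) hint2
    have e2 : ∫ x, ((f x - 1) ^ 2 / (f x + 2) - 2 * t * |f x - 1|) ∂ν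
        = I - ∫ x, 2 * t * |f x - 1| ∂ν := by
      rw [integral_sub hI_int hint1]
    have e3 : ∫ x, 2 * t * |f x - 1| ∂ν = 2 * t * J := integral_const_mul _ _
    have e4 : ∫ x, t ^ 2 * (f x + 2) ∂ν = t ^ 2 * 3 := by
      rw [integral_const_mul]
      have : ∫ x, (f x + 2) ∂ν = (∫ x, f x ∂ν) + ∫ _x, (2:ℝ) ∂ν :=
        integral_add hf_int (integrable_const 2)
      rw [this, hf1]
      simp only [integral_const, probReal_univ, smul_eq_mul]
      norm_num
    rw [e1, e2, e3, e4, ht] at h0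
    nlinarith [h0]
  -- bound the total variation
  have hfm1_int : Integrable (fun x => f x - 1) ν := hf_int.sub (integrable_const 1)
  have htv : tvDist μ ν ≤ J / 2 := by
    have : Nonempty {A : Set X // MeasurableSet A} := ⟨⟨∅, MeasurableSet.empty⟩⟩
    refine ciSup_le fun A => ?_
    obtain ⟨s, hs⟩ := A
    have hμs : (μ s).toReal = ∫ x in s, f x ∂ν :=
      (Measure.setIntegral_toReal_rnDeriv hμν s).symm
    have hνs : (ν s).toReal = ∫ x in s, (1:ℝ) ∂ν := by
      simp [setIntegral_const]
      rfl
    have hdiff : (μ s).toReal - (ν s).toReal = ∫ x in s, (f x - 1) ∂ν := by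
      rw [hμs, hνs, integral_sub hf_int.integrableOn (integrableOn_const (measure_ne_top ν s))]
    have htot : (∫ x in s, (f x - 1) ∂ν) + (∫ x in sᶜ, (f x - 1) ∂ν) = 0 := by
      rw [integral_add_compl hs hfm1_int, integral_sub hf_int (integrable_const 1), hf1]
      simp
    have h1 : |∫ x in s, (f x - 1) ∂ν| ≤ ∫ x in s, |f x - 1| ∂ν :=
      by
      simpa [Real.norm_eq_abs] using
        norm_integral_le_integral_norm (μ := ν.restrict s) (fun x => f x - 1)
    have h2 : |∫ x in sᶜ, (f x - 1) ∂ν| ≤ ∫ x in sᶜ, |f x - 1| ∂ν := by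
      simpa [Real.norm_eq_abs] using
        norm_integral_le_integral_norm (μ := ν.restrict sᶜ) (fun x => f x - 1)
    have hsum : (∫ x in s, |f x - 1| ∂ν) + (∫ x in sᶜ, |f x - 1| ∂ν) = J :=
      integral_add_compl hs habs_int
    have heq : |∫ x in sᶜ, (f x - 1) ∂ν| = |∫ x in s, (f x - 1) ∂ν| := by
      have : (∫ x in sᶜ, (f x - 1) ∂ν) = -(∫ x in s, (f x - 1) ∂ν) := by linarith
      rw [this, abs_neg]
    rw [hdiff]
    linarith [h1, h2, heq ▸ h2]
  have htv_nonneg : 0 ≤ tvDist μ ν := Real.iSup_nonneg fun A => abs_nonneg _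
  have hsq : (tvDist μ ν) ^ 2 ≤ (J / 2) ^ 2 := pow_le_pow_left₀ htv_nonneg htv 2
  nlinarith [hCS, hI_le, hsq]

lemma tvDist_nonneg {X : Type*} [MeasurableSpace X] (μ ν : Measure X) :
    0 ≤ tvDist μ ν := Real.iSup_nonneg fun _ => abs_nonneg _

lemma tvDist_comm {X : Type*} [MeasurableSpace X] (μ ν : Measure X) :
    tvDist μ ν = tvDist ν μ := by
  unfold tvDist
  congr 1
  funext A
  rw [abs_sub_comm]

lemma pinsker_klDiv {X : Type*} [MeasurableSpace X] (μ ν : Measure X)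
    [IsProbabilityMeasure μ] [IsProbabilityMeasure ν] :
    ((2 * (tvDist μ ν) ^ 2 : ℝ) : EReal) ≤ klDiv μ ν := by
  unfold klDiv
  split_ifs with h
  · exact EReal.coe_le_coe_iff.mpr (pinsker_real μ ν h.1 h.2)
  · exact le_top

lemma sup_step {ι : Type*} [Nonempty ι] (c : ι → ℝ) (hc : ∀ i, 0 ≤ c i)
    (E : ι → EReal) (G : EReal)
    (hE : ∀ i, ((2 * (c i) ^ 2 : ℝ) : EReal) ≤ E i) (hEG : ∀ i, E i ≤ G) :
    ((2 * (⨆ i, c i) ^ 2 : ℝ) : EReal) ≤ G := by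
  set s : ℝ := ⨆ i, c i with hs'
  have hs : 0 ≤ s := Real.iSup_nonneg hc
  by_contra hlt
  push_neg at hlt
  obtain ⟨r, hGr, hrs⟩ := EReal.exists_between_coe_real hlt
  rw [EReal.coe_lt_coe_iff] at hrs
  rcases le_or_gt r 0 with hr0 | hr0
  · obtain ⟨i⟩ := ‹Nonempty ι›
    have h2 : (r : EReal) ≤ ((2 * (c i) ^ 2 : ℝ) : EReal) := by
      apply EReal.coe_le_coe_iff.mpr
      nlinarith [hc i, sq_nonneg (c i)]
    exact absurd (h2.trans ((hE i).trans (hEG i))) (not_le.mpr hGr)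
  · have hspos : 0 < s := by nlinarith
    have h1 : Real.sqrt (r / 2) < s := by
      rw [Real.sqrt_lt' hspos]
      nlinarith
    obtain ⟨i, hi⟩ := exists_lt_of_lt_ciSup h1
    have h2 : r < 2 * (c i) ^ 2 := by
      have h3 : Real.sqrt (r / 2) ^ 2 < (c i) ^ 2 :=
        pow_lt_pow_left₀ hi (Real.sqrt_nonneg _) (by norm_num)
      rw [Real.sq_sqrt (by linarith : (0:ℝ) ≤ r / 2)] at h3
      linarith
    have h4 := (EReal.coe_lt_coe_iff.mpr h2).trans_le ((hE i).trans (hEG i))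
    exact absurd h4 (not_lt.mpr hGr.le)

theorem generalized_pinsker {X : Type*} [MeasurableSpace X] [TopologicalSpace X]
    [PolishSpace X] [BorelSpace X] (P Q : Set (ProbabilityMeasure X))
    (hPne : P.Nonempty) (hQne : Q.Nonempty) (hPc : IsCompact P) (hQc : IsCompact Q)
    (hPconv : ConvexPM P) (hQconv : ConvexPM Q) :
    ((2 * (genV P Q)^2 : ℝ) : EReal) ≤ max (genKL P Q) (genKL Q P) := by
  have hPn : Nonempty P := hPne.to_subtype
  have hQn : Nonempty Q := hQne.to_subtype
  set cP : P → ℝ := fun μ => ⨅ ν : Q, tvDist μ.1.toMeasure ν.1.toMeasure with hcP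
  set cQ : Q → ℝ := fun ν => ⨅ μ : P, tvDist μ.1.toMeasure ν.1.toMeasure with hcQ
  set a : ℝ := ⨆ μ : P, cP μ with ha
  set b : ℝ := ⨆ ν : Q, cQ ν with hb
  have hcP_nonneg : ∀ μ : P, 0 ≤ cP μ :=
    fun μ => Real.iInf_nonneg fun ν => tvDist_nonneg _ _
  have hcQ_nonneg : ∀ ν : Q, 0 ≤ cQ ν :=
    fun ν => Real.iInf_nonneg fun μ => tvDist_nonneg _ _
  have ha_nonneg : 0 ≤ a := Real.iSup_nonneg hcP_nonneg
  have hb_nonneg : 0 ≤ b := Real.iSup_nonneg hcQ_nonneg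
  -- key1 : per-μ bound
  have key1 : ∀ μ : P, ((2 * (cP μ) ^ 2 : ℝ) : EReal)
      ≤ ⨅ ν ∈ Q, klDiv μ.1.toMeasure ν.toMeasure := by
    intro μ
    refine le_iInf₂ fun ν hν => ?_
    have h1 : cP μ ≤ tvDist μ.1.toMeasure ν.toMeasure := by
      have : BddBelow (Set.range fun ν : Q => tvDist μ.1.toMeasure ν.1.toMeasure) :=
        ⟨0, by rintro x ⟨ν', rfl⟩; exact tvDist_nonneg _ _⟩
      exact ciInf_le this ⟨ν, hν⟩
    calc ((2 * (cP μ) ^ 2 : ℝ) : EReal)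
        ≤ ((2 * (tvDist μ.1.toMeasure ν.toMeasure) ^ 2 : ℝ) : EReal) := by
          apply EReal.coe_le_coe_iff.mpr
          have := pow_le_pow_left₀ (hcP_nonneg μ) h1 2
          linarith
      _ ≤ klDiv μ.1.toMeasure ν.toMeasure := pinsker_klDiv _ _
  have key1' : ∀ ν : Q, ((2 * (cQ ν) ^ 2 : ℝ) : EReal)
      ≤ ⨅ μ ∈ P, klDiv ν.1.toMeasure μ.toMeasure := by
    intro ν
    refine le_iInf₂ fun μ hμ => ?_
    have h1 : cQ ν ≤ tvDist ν.1.toMeasure μ.toMeasure := by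
      have : BddBelow (Set.range fun μ : P => tvDist μ.1.toMeasure ν.1.toMeasure) :=
        ⟨0, by rintro x ⟨μ', rfl⟩; exact tvDist_nonneg _ _⟩
      have h2 := ciInf_le this (⟨μ, hμ⟩ : P)
      rw [tvDist_comm]
      exact h2
    calc ((2 * (cQ ν) ^ 2 : ℝ) : EReal)
        ≤ ((2 * (tvDist ν.1.toMeasure μ.toMeasure) ^ 2 : ℝ) : EReal) := by
          apply EReal.coe_le_coe_iff.mpr
          have := pow_le_pow_left₀ (hcQ_nonneg ν) h1 2
          linarith
      _ ≤ klDiv ν.1.toMeasure μ.toMeasure := pinsker_klDiv _ _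
  have hA : ((2 * a ^ 2 : ℝ) : EReal) ≤ genKL P Q := by
    rw [ha]
    refine sup_step cP hcP_nonneg
      (fun μ : P => ⨅ ν ∈ Q, klDiv μ.1.toMeasure ν.toMeasure) _ key1 ?_
    intro μ
    exact le_iSup₂ (f := fun μ' (_ : μ' ∈ P) => ⨅ ν ∈ Q, klDiv μ'.toMeasure ν.toMeasure) μ.1 μ.2
  have hB : ((2 * b ^ 2 : ℝ) : EReal) ≤ genKL Q P := by
    rw [hb]
    refine sup_step cQ hcQ_nonneg
      (fun ν : Q => ⨅ μ ∈ P, klDiv ν.1.toMeasure μ.toMeasure) _ key1' ?_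
    intro ν
    exact le_iSup₂ (f := fun ν' (_ : ν' ∈ Q) => ⨅ μ ∈ P, klDiv ν'.toMeasure μ.toMeasure) ν.1 ν.2
  have hgenV : genV P Q = max a b := rfl
  rcases le_total a b with h | h
  · rw [hgenV, max_eq_right h]
    exact hB.trans (le_max_right _ _)
  · rw [hgenV, max_eq_left h]
    exact hA.trans (le_max_left _ _)
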